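/- (Proposition 7: affine energy equals Dirichlet energy for radial functions.) Let 1 ≤ p < n and let u : ℝⁿ → ℝ be a C¹ function with compact support that is radial, i.e. u(x) = φ(|x|) for some function φ : [0,∞) → ℝ. Then E_p(u) = (∫_{ℝⁿ} |∇u(x)|^p dx)^{1/p}. -/

import Mathlib

open MeasureTheory Metric Filter
open scoped ENNReal RealInnerProductSpace NNReal

noncomputable section

/-- Euclidean n-space `ℝⁿ`. -/
abbrev En (n : ℕ) : Type := EuclideanSpace ℝ (Fin n)

/-- The unit sphere `S^{n-1}` of `ℝⁿ`. -/
abbrev unitSphere (n : ℕ) := Metric.sphere (0 : En n) 1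

/-- The surface measure `σ` on the unit sphere, with `σ(S^{n-1}) = n ω_n`. -/
def sphereMeasure (n : ℕ) : Measure (unitSphere n) :=
  (volume : Measure (En n)).toSphere

/-- `n ω_n`, where `ω_n` is the volume of the unit Euclidean ball of `ℝⁿ`. -/
def nOmega (n : ℕ) : ℝ := (n : ℝ) * (volume (Metric.ball (0 : En n) 1)).toReal

/-- The directional energy `Ψ_ξ(u) = ∫_Ω |∇u(x)·ξ|^p dx`. -/
def Psi (n : ℕ) (p : ℝ) (Ω : Set (En n)) (u : En n → ℝ) (ξ : unitSphere n) : ℝ :=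
  ∫ x in Ω, |fderiv ℝ u x (ξ : En n)| ^ p

/-- The normalizing constant `α_{n,p}` relative to a chosen unit vector `e₁`. -/
def alphanp (n : ℕ) (p : ℝ) (e₁ : En n) : ℝ :=
  nOmega n ^ (((n : ℝ) + p) / ((n : ℝ) * p)) *
    (∫ ξ, |⟪e₁, (ξ : En n)⟫| ^ p ∂(sphereMeasure n)) ^ (-(1 / p))

/-- The affine `L^p` energy `E_{p,Ω}(u)`; the conventions `0^{-n/p} = +∞`
and `(+∞)^{-1/n} = 0` are built into `ENNReal.rpow`. -/
def affineEnergy (n : ℕ) (p : ℝ) (e₁ : En n) (Ω : Set (En n)) (u : En n → ℝ) : ℝ :=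
  alphanp n p e₁ *
    ((∫⁻ ξ, ENNReal.ofReal (Psi n p Ω u ξ) ^ (-((n : ℝ) / p)) ∂(sphereMeasure n)) ^
      (-(1 / (n : ℝ)))).toReal

/-- The directional energy over all of `ℝⁿ`: `Ψ_ξ(u) = ∫_{ℝⁿ} |∇u(x)·ξ|^p dx`. -/
def PsiAll (n : ℕ) (p : ℝ) (u : En n → ℝ) (ξ : unitSphere n) : ℝ :=
  ∫ x, |fderiv ℝ u x (ξ : En n)| ^ p

/-- The affine `L^p` energy `E_p(u)` on `ℝⁿ`; the conventions `0^{-n/p} = +∞`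
and `(+∞)^{-1/n} = 0` are built into `ENNReal.rpow`. -/
def affineEnergyAll (n : ℕ) (p : ℝ) (e₁ : En n) (u : En n → ℝ) : ℝ :=
  alphanp n p e₁ *
    ((∫⁻ ξ, ENNReal.ofReal (PsiAll n p u ξ) ^ (-((n : ℝ) / p)) ∂(sphereMeasure n)) ^
      (-(1 / (n : ℝ)))).toReal

section Radial

variable {n : ℕ} {u : En n → ℝ} {φ : ℝ → ℝ}

theorem radial_key (hu : ContDiff ℝ 1 u) (hrad : ∀ x : En n, u x = φ ‖x‖)
    (R : En n ≃ₗᵢ[ℝ] En n) (x v : En n) :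
    fderiv ℝ u x v = fderiv ℝ u (R x) (R v) := by
  set L : En n →L[ℝ] En n := (R.toContinuousLinearEquiv : En n →L[ℝ] En n) with hL
  have hLcoe : ∀ y, L y = R y := fun y => rfl
  have hR : HasFDerivAt (⇑L) L x := L.hasFDerivAt
  have hu' : HasFDerivAt u (fderiv ℝ u (L x)) (L x) :=
    (hu.differentiable one_ne_zero (L x)).hasFDerivAt
  have hcomp : HasFDerivAt (u ∘ ⇑L) ((fderiv ℝ u (L x)).comp L) x := hu'.comp x hR
  have huL : u ∘ ⇑L = u := by
    funext y
    simp only [Function.comp_apply, hLcoe, hrad, R.norm_map]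
  rw [huL] at hcomp
  have : fderiv ℝ u x = (fderiv ℝ u (L x)).comp L := hcomp.fderiv
  rw [this]
  rfl

theorem radial_fderiv_zero (hu : ContDiff ℝ 1 u) (hrad : ∀ x : En n, u x = φ ‖x‖) :
    fderiv ℝ u 0 = 0 := by
  ext v
  have h := radial_key hu hrad (LinearIsometryEquiv.neg ℝ) 0 v
  simp only [LinearIsometryEquiv.coe_neg, neg_zero, map_neg] at h
  have : fderiv ℝ u 0 v = 0 := by linarith
  simpa using this

theorem radial_perp (hu : ContDiff ℝ 1 u) (hrad : ∀ x : En n, u x = φ ‖x‖)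
    (x v : En n) (hperp : ⟪v, x⟫ = 0) :
    fderiv ℝ u x v = 0 := by
  set R : En n ≃ₗᵢ[ℝ] En n := Submodule.reflection (ℝ ∙ v)ᗮ with hR
  have hx : R x = x :=
    Submodule.reflection_mem_subspace_eq_self
      ((Submodule.mem_orthogonal_singleton_iff_inner_right).mpr hperp)
  have hv : R v = -v := Submodule.reflection_orthogonalComplement_singleton_eq_neg v
  have h := radial_key hu hrad R x v
  rw [hx, hv, map_neg] at h
  linarith

end Radial

section Radial2

variable {n : ℕ} {u : En n → ℝ} {φ : ℝ → ℝ}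

theorem radial_factor (hu : ContDiff ℝ 1 u) (hrad : ∀ x : En n, u x = φ ‖x‖)
    {x : En n} (hx : x ≠ 0) (ξ : En n) :
    fderiv ℝ u x ξ = ⟪‖x‖⁻¹ • x, ξ⟫ * fderiv ℝ u x (‖x‖⁻¹ • x) := by
  set y : En n := ‖x‖⁻¹ • x with hy
  have hnx : (‖x‖ : ℝ) ≠ 0 := norm_ne_zero_iff.mpr hx
  set c : ℝ := ⟪y, ξ⟫ with hc
  have hdecomp : ξ = c • y + (ξ - c • y) := by abel
  have hperp : ⟪ξ - c • y, x⟫ = 0 := by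
    have hyx : ⟪y, x⟫ = ‖x‖ := by
      rw [hy, real_inner_smul_left, real_inner_self_eq_norm_sq]
      field_simp
    have : ⟪ξ - c • y, x⟫ = ⟪ξ, x⟫ - c * ⟪y, x⟫ := by
      rw [inner_sub_left, real_inner_smul_left]
    rw [this, hyx, hc, hy, real_inner_smul_left, real_inner_comm]
    field_simp
    ring
  have h0 : fderiv ℝ u x (ξ - c • y) = 0 := radial_perp hu hrad x _ hperp
  calc fderiv ℝ u x ξ = fderiv ℝ u x (c • y + (ξ - c • y)) := by rw [← hdecomp]
    _ = c * fderiv ℝ u x y + fderiv ℝ u x (ξ - c • y) := by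
        rw [map_add, (fderiv ℝ u x).map_smul, smul_eq_mul]
    _ = c * fderiv ℝ u x y := by rw [h0, add_zero]

theorem radial_norm_fderiv (hu : ContDiff ℝ 1 u) (hrad : ∀ x : En n, u x = φ ‖x‖)
    {x : En n} (hx : x ≠ 0) :
    ‖fderiv ℝ u x‖ = |fderiv ℝ u x (‖x‖⁻¹ • x)| := by
  have hunit : ‖(‖x‖⁻¹ • x : En n)‖ = 1 := norm_smul_inv_norm hx
  have heq : fderiv ℝ u x
      = (fderiv ℝ u x (‖x‖⁻¹ • x)) • (innerSL ℝ (‖x‖⁻¹ • x)) := by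
    ext ξ
    rw [radial_factor hu hrad hx ξ, ContinuousLinearMap.smul_apply, innerSL_apply_apply,
      smul_eq_mul, mul_comm]
  conv_lhs => rw [heq]
  rw [norm_smul, innerSL_apply_norm, hunit, mul_one, Real.norm_eq_abs]

end Radial2

section Radial3

variable {n : ℕ} {u : En n → ℝ} {φ : ℝ → ℝ} {e₁ : En n}

theorem radial_norm_radial (hu : ContDiff ℝ 1 u) (hrad : ∀ x : En n, u x = φ ‖x‖)
    (he₁ : ‖e₁‖ = 1) (x : En n) :
    ‖fderiv ℝ u x‖ = ‖fderiv ℝ u (‖x‖ • e₁)‖ := by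
  rcases eq_or_ne x 0 with rfl | hx
  · simp
  · set y : En n := ‖x‖ • e₁ with hy
    have hnorm : ‖y‖ = ‖x‖ := by
      rw [hy, norm_smul, he₁, mul_one, Real.norm_eq_abs, abs_of_nonneg (norm_nonneg x)]
    set R : En n ≃ₗᵢ[ℝ] En n := Submodule.reflection (ℝ ∙ (y - x))ᗮ with hR
    have hRy : R y = x := Submodule.reflection_sub hnorm
    have hkey : ∀ v, fderiv ℝ u y v = fderiv ℝ u x (R v) := fun v => by
      have h := radial_key hu hrad R y v
      rwa [hRy] at h
    have hkey' : ∀ w, fderiv ℝ u x w = fderiv ℝ u y (R.symm w) := fun w => by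
      rw [hkey (R.symm w), R.apply_symm_apply]
    refine le_antisymm ?_ ?_
    · refine ContinuousLinearMap.opNorm_le_bound _ (norm_nonneg _) fun w => ?_
      rw [hkey' w]
      calc ‖fderiv ℝ u y (R.symm w)‖ ≤ ‖fderiv ℝ u y‖ * ‖R.symm w‖ :=
            (fderiv ℝ u y).le_opNorm _
        _ = ‖fderiv ℝ u y‖ * ‖w‖ := by rw [R.symm.norm_map]
    · refine ContinuousLinearMap.opNorm_le_bound _ (norm_nonneg _) fun v => ?_
      rw [hkey v]
      calc ‖fderiv ℝ u x (R v)‖ ≤ ‖fderiv ℝ u x‖ * ‖R v‖ := (fderiv ℝ u x).le_opNorm _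
        _ = ‖fderiv ℝ u x‖ * ‖v‖ := by rw [R.norm_map]

theorem radial_psi_const (hu : ContDiff ℝ 1 u) (hrad : ∀ x : En n, u x = φ ‖x‖)
    (he₁ : ‖e₁‖ = 1) (p : ℝ) (ξ : unitSphere n) :
    (∫ x, |fderiv ℝ u x (ξ : En n)| ^ p) = ∫ x, |fderiv ℝ u x e₁| ^ p := by
  have hξ : ‖(ξ : En n)‖ = 1 := by
    have := ξ.2
    rwa [mem_sphere_zero_iff_norm] at this
  set R : En n ≃ₗᵢ[ℝ] En n := Submodule.reflection (ℝ ∙ (e₁ - (ξ : En n)))ᗮ with hR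
  have hRe : R e₁ = (ξ : En n) := Submodule.reflection_sub (by rw [he₁, hξ])
  have hmp : MeasurePreserving (⇑R) (volume : Measure (En n)) volume :=
    R.measurePreserving
  have hcv : (∫ x, |fderiv ℝ u x (ξ : En n)| ^ p)
      = ∫ x, |fderiv ℝ u (R x) (ξ : En n)| ^ p := by
    exact (hmp.integral_comp R.toHomeomorph.measurableEmbedding
      (fun y => |fderiv ℝ u y (ξ : En n)| ^ p)).symm
  rw [hcv]
  congr 1
  funext x
  rw [← hRe, ← radial_key hu hrad R x e₁]

end Radial3


instance (n : ℕ) : IsFiniteMeasure (sphereMeasure n) :=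
  inferInstanceAs (IsFiniteMeasure (volume : Measure (En n)).toSphere)

theorem polar_lemma (n : ℕ) (A : En n → ℝ≥0∞) (B : ℝ → ℝ≥0∞)
    (hA : Measurable A) (hB : Measurable B) (F : En n → ℝ≥0∞)
    (h0 : (volume : Measure (En n)) {0} = 0)
    (hF : ∀ x : En n, x ≠ 0 → F x = A (‖x‖⁻¹ • x) * B ‖x‖) :
    ∫⁻ x, F x = (∫⁻ ξ, A (ξ : En n) ∂sphereMeasure n) *
      ∫⁻ r : Set.Ioi (0:ℝ), B r.1
        ∂(Measure.volumeIoiPow (Module.finrank ℝ (En n) - 1)) := by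
  have hstep1 : ∫⁻ x, F x = ∫⁻ x in ({0}ᶜ : Set (En n)), F x := by
    rw [← lintegral_add_compl F (measurableSet_singleton (0 : En n)),
      setLIntegral_measure_zero _ _ h0, zero_add]
  have hstep2 : ∫⁻ x in ({0}ᶜ : Set (En n)), F x
      = ∫⁻ x : ({0}ᶜ : Set (En n)), F x ∂((volume : Measure (En n)).comap (↑)) :=
    (lintegral_subtype_comap (measurableSet_singleton (0 : En n)).compl F).symm
  have hmp := MeasureTheory.Measure.measurePreserving_homeomorphUnitSphereProd
    (volume : Measure (En n))
  have hmeas : Measurable fun z : unitSphere n × Set.Ioi (0:ℝ) =>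
      A (z.1 : En n) * B z.2.1 :=
    ((hA.comp measurable_subtype_coe).comp measurable_fst).mul
      ((hB.comp measurable_subtype_coe).comp measurable_snd)
  have hstep3 : ∫⁻ x : ({0}ᶜ : Set (En n)), F x ∂((volume : Measure (En n)).comap (↑))
      = ∫⁻ z : unitSphere n × Set.Ioi (0:ℝ), A (z.1 : En n) * B z.2.1
          ∂((volume : Measure (En n)).toSphere.prod
            (Measure.volumeIoiPow (Module.finrank ℝ (En n) - 1))) := by
    rw [← hmp.lintegral_comp hmeas]
    refine lintegral_congr fun a => ?_
    have ha : (a : En n) ≠ 0 := a.2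
    simp only [homeomorphUnitSphereProd_apply_fst_coe, homeomorphUnitSphereProd_apply_snd_coe]
    exact hF a ha
  have hf : AEMeasurable (fun ξ : unitSphere n => A (ξ : En n))
      ((volume : Measure (En n)).toSphere) :=
    (hA.comp measurable_subtype_coe).aemeasurable
  have hg : AEMeasurable (fun r : Set.Ioi (0:ℝ) => B r.1)
      (Measure.volumeIoiPow (Module.finrank ℝ (En n) - 1)) :=
    (hB.comp measurable_subtype_coe).aemeasurable
  rw [hstep1, hstep2, hstep3]
  exact lintegral_prod_mul hf hg

section Integrab

variable {n : ℕ} {u : En n → ℝ} {p : ℝ}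

theorem aux_integrable_apply (hu : ContDiff ℝ 1 u) (hcs : HasCompactSupport u)
    (hp0 : 0 < p) (e : En n) :
    Integrable (fun x => |fderiv ℝ u x e| ^ p) (volume : Measure (En n)) := by
  have hfc : Continuous (fderiv ℝ u) := hu.continuous_fderiv one_ne_zero
  have hcont : Continuous fun x => |fderiv ℝ u x e| ^ p :=
    ((hfc.clm_apply continuous_const).abs).rpow_const fun x => Or.inr hp0.le
  have hsupp : HasCompactSupport fun x => |fderiv ℝ u x e| ^ p :=
    (hcs.fderiv ℝ).comp_left (g := fun L : En n →L[ℝ] ℝ => |L e| ^ p)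
      (by simp [Real.zero_rpow hp0.ne'])
  exact hcont.integrable_of_hasCompactSupport hsupp

theorem aux_integrable_norm (hu : ContDiff ℝ 1 u) (hcs : HasCompactSupport u)
    (hp0 : 0 < p) :
    Integrable (fun x => ‖fderiv ℝ u x‖ ^ p) (volume : Measure (En n)) := by
  have hfc : Continuous (fderiv ℝ u) := hu.continuous_fderiv one_ne_zero
  have hcont : Continuous fun x => ‖fderiv ℝ u x‖ ^ p :=
    (hfc.norm).rpow_const fun x => Or.inr hp0.le
  have hsupp : HasCompactSupport fun x => ‖fderiv ℝ u x‖ ^ p :=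
    (hcs.fderiv ℝ).comp_left (g := fun L : En n →L[ℝ] ℝ => ‖L‖ ^ p)
      (by simp [Real.zero_rpow hp0.ne'])
  exact hcont.integrable_of_hasCompactSupport hsupp

end Integrab

theorem sphereMeasure_univ (n : ℕ) :
    sphereMeasure n Set.univ = (n : ℝ≥0∞) * volume (Metric.ball (0 : En n) 1) := by
  rw [sphereMeasure, Measure.toSphere_apply_univ, finrank_euclideanSpace_fin]

theorem nOmega_pos {n : ℕ} (hn : 2 ≤ n) : 0 < nOmega n := by
  have h1 : (0 : ℝ) < (n : ℝ) := by
    exact_mod_cast Nat.lt_of_lt_of_le Nat.zero_lt_two hn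
  have h2 : 0 < (volume (Metric.ball (0 : En n) 1)).toReal :=
    ENNReal.toReal_pos (measure_ball_pos volume 0 one_pos).ne' measure_ball_lt_top.ne
  exact mul_pos h1 h2

theorem sphereMeasure_univ_ofReal {n : ℕ} (hn : 2 ≤ n) :
    sphereMeasure n Set.univ = ENNReal.ofReal (nOmega n) := by
  rw [sphereMeasure_univ, nOmega, ENNReal.ofReal_mul (by positivity),
    ENNReal.ofReal_natCast, ENNReal.ofReal_toReal measure_ball_lt_top.ne]

section Facts

variable {n : ℕ} {u : En n → ℝ} {φ : ℝ → ℝ} {e₁ : En n} {p : ℝ}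

theorem volume_singleton_zero {n : ℕ} (hn : 2 ≤ n) :
    (volume : Measure (En n)) {0} = 0 := by
  haveI : NeZero n := ⟨by omega⟩
  exact measure_singleton 0

theorem B_measurable (hu : ContDiff ℝ 1 u) (hp0 : 0 < p) (e₁ : En n) :
    Measurable fun r : ℝ => ENNReal.ofReal (‖fderiv ℝ u (r • e₁)‖ ^ p) := by
  have hfc : Continuous (fderiv ℝ u) := hu.continuous_fderiv one_ne_zero
  have : Continuous fun r : ℝ => ‖fderiv ℝ u (r • e₁)‖ ^ p :=
    ((hfc.comp (continuous_id.smul continuous_const)).norm).rpow_const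
      fun x => Or.inr hp0.le
  exact ENNReal.measurable_ofReal.comp this.measurable

theorem hD_fact (hn : 2 ≤ n) (hu : ContDiff ℝ 1 u) (hcs : HasCompactSupport u)
    (hrad : ∀ x : En n, u x = φ ‖x‖) (he₁ : ‖e₁‖ = 1) (hp0 : 0 < p) :
    ENNReal.ofReal (∫ x, ‖fderiv ℝ u x‖ ^ p) =
      sphereMeasure n Set.univ *
        ∫⁻ r : Set.Ioi (0:ℝ), ENNReal.ofReal (‖fderiv ℝ u (r.1 • e₁)‖ ^ p)
          ∂(Measure.volumeIoiPow (Module.finrank ℝ (En n) - 1)) := by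
  rw [ofReal_integral_eq_lintegral_ofReal (aux_integrable_norm hu hcs hp0)
    (Filter.Eventually.of_forall fun x => by positivity)]
  rw [polar_lemma n (fun _ => 1) (fun r => ENNReal.ofReal (‖fderiv ℝ u (r • e₁)‖ ^ p))
    measurable_const (B_measurable hu hp0 e₁) _ (volume_singleton_zero hn)
    (fun x hx => by rw [radial_norm_radial hu hrad he₁ x, one_mul])]
  rw [lintegral_one]

theorem hC_fact (hn : 2 ≤ n) (hu : ContDiff ℝ 1 u) (hcs : HasCompactSupport u)
    (hrad : ∀ x : En n, u x = φ ‖x‖) (he₁ : ‖e₁‖ = 1) (hp0 : 0 < p) :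
    ENNReal.ofReal (∫ x, |fderiv ℝ u x e₁| ^ p) =
      (∫⁻ ξ, ENNReal.ofReal (|⟪e₁, (ξ : En n)⟫| ^ p) ∂sphereMeasure n) *
        ∫⁻ r : Set.Ioi (0:ℝ), ENNReal.ofReal (‖fderiv ℝ u (r.1 • e₁)‖ ^ p)
          ∂(Measure.volumeIoiPow (Module.finrank ℝ (En n) - 1)) := by
  have hAmeas : Measurable fun y : En n => ENNReal.ofReal (|⟪e₁, y⟫| ^ p) := by
    have : Continuous fun y : En n => |⟪e₁, y⟫| ^ p :=
      ((continuous_const.inner continuous_id).abs).rpow_const fun x => Or.inr hp0.le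
    exact ENNReal.measurable_ofReal.comp this.measurable
  rw [ofReal_integral_eq_lintegral_ofReal (aux_integrable_apply hu hcs hp0 e₁)
    (Filter.Eventually.of_forall fun x => by positivity)]
  rw [polar_lemma n (fun y => ENNReal.ofReal (|⟪e₁, y⟫| ^ p))
    (fun r => ENNReal.ofReal (‖fderiv ℝ u (r • e₁)‖ ^ p))
    hAmeas (B_measurable hu hp0 e₁) _ (volume_singleton_zero hn)
    (fun x hx => ?_)]
  have h1 : |fderiv ℝ u x e₁| = |⟪e₁, ‖x‖⁻¹ • x⟫| * ‖fderiv ℝ u x‖ := by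
    rw [radial_factor hu hrad hx e₁, abs_mul, radial_norm_fderiv hu hrad hx,
      real_inner_comm]
  rw [h1, Real.mul_rpow (abs_nonneg _) (norm_nonneg _),
    radial_norm_radial hu hrad he₁ x, ENNReal.ofReal_mul (by positivity)]

end Facts

section CSigma

variable {n : ℕ} {e₁ : En n} {p : ℝ}

theorem csigma_ne_top (he₁ : ‖e₁‖ = 1) (hp0 : 0 < p) :
    (∫⁻ ξ, ENNReal.ofReal (|⟪e₁, (ξ : En n)⟫| ^ p) ∂sphereMeasure n) ≠ ⊤ := by
  have hb : ∀ ξ : unitSphere n,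
      ENNReal.ofReal (|⟪e₁, (ξ : En n)⟫| ^ p) ≤ 1 := by
    intro ξ
    have hξ : ‖(ξ : En n)‖ = 1 := by
      have := ξ.2; rwa [mem_sphere_zero_iff_norm] at this
    have h1 : |⟪e₁, (ξ : En n)⟫| ≤ 1 := by
      have := abs_real_inner_le_norm e₁ (ξ : En n)
      rwa [he₁, hξ, one_mul] at this
    exact ENNReal.ofReal_le_one.mpr (Real.rpow_le_one (abs_nonneg _) h1 hp0.le)
  have : (∫⁻ ξ, ENNReal.ofReal (|⟪e₁, (ξ : En n)⟫| ^ p) ∂sphereMeasure n)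
      ≤ ∫⁻ _, 1 ∂sphereMeasure n := lintegral_mono fun ξ => hb ξ
  rw [lintegral_one] at this
  exact (lt_of_le_of_lt this (measure_lt_top _ _)).ne

theorem csigma_ne_zero (hn : 2 ≤ n) (he₁ : ‖e₁‖ = 1) (hp0 : 0 < p) :
    (∫⁻ ξ, ENNReal.ofReal (|⟪e₁, (ξ : En n)⟫| ^ p) ∂sphereMeasure n) ≠ 0 := by
  intro h
  have hAmeas : Measurable fun ξ : unitSphere n =>
      ENNReal.ofReal (|⟪e₁, (ξ : En n)⟫| ^ p) := by
    have : Continuous fun ξ : unitSphere n => |⟪e₁, (ξ : En n)⟫| ^ p :=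
      ((continuous_const.inner continuous_subtype_val).abs).rpow_const
        fun x => Or.inr hp0.le
    exact ENNReal.measurable_ofReal.comp this.measurable
  have hae := (lintegral_eq_zero_iff hAmeas).mp h
  set A' : En n → ℝ≥0∞ := fun y => if ⟪e₁, y⟫ = 0 then 0 else 1 with hA'
  have hsmeas : MeasurableSet {y : En n | ⟪e₁, y⟫ = 0} :=
    (isClosed_eq (continuous_const.inner continuous_id) continuous_const).measurableSet
  have hA'meas : Measurable A' := Measurable.ite hsmeas measurable_const measurable_const
  have haeA : (fun ξ : unitSphere n => A' (ξ : En n)) =ᵐ[sphereMeasure n] 0 := by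
    filter_upwards [hae] with ξ hξ
    by_cases hz : ⟪e₁, (ξ : En n)⟫ = 0
    · show (if ⟪e₁, (ξ : En n)⟫ = 0 then (0:ℝ≥0∞) else 1) = 0
      exact if_pos hz
    · exfalso
      have hpos : 0 < |⟪e₁, (ξ : En n)⟫| ^ p :=
        Real.rpow_pos_of_pos (abs_pos.mpr hz) p
      rw [Pi.zero_apply] at hξ
      exact (ENNReal.ofReal_pos.mpr hpos).ne' hξ
  have hintA : (∫⁻ ξ, A' (ξ : En n) ∂sphereMeasure n) = 0 := by
    rw [lintegral_congr_ae haeA]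
    simp
  have hpolar := polar_lemma n A' (fun _ => 1) hA'meas measurable_const
    (fun x => if ⟪e₁, x⟫ = 0 then 0 else 1) (volume_singleton_zero hn)
    (fun x hx => by
      have hiff : (⟪e₁, ‖x‖⁻¹ • x⟫ = 0) ↔ (⟪e₁, x⟫ = 0) := by
        rw [real_inner_smul_right]
        constructor
        · intro h'
          rcases mul_eq_zero.mp h' with h'' | h''
          · exact absurd h'' (inv_ne_zero (norm_ne_zero_iff.mpr hx))
          · exact h''
        · intro h'; rw [h', mul_zero]
      simp only [hA', mul_one]
      by_cases hz : ⟪e₁, x⟫ = 0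
      · rw [if_pos hz, if_pos (hiff.mpr hz)]
      · rw [if_neg hz, if_neg (fun hc => hz (hiff.mp hc))])
  rw [hintA, zero_mul] at hpolar
  set U : Set (En n) := {x | ⟪e₁, x⟫ ≠ 0} with hU
  have hUopen : IsOpen U :=
    isOpen_compl_iff.mpr (isClosed_eq (continuous_const.inner continuous_id) continuous_const)
  have hUvol : volume U = 0 := by
    have : (∫⁻ x, (if ⟪e₁, x⟫ = 0 then (0:ℝ≥0∞) else 1)) = ∫⁻ x, U.indicator 1 x := by
      refine lintegral_congr fun x => ?_
      by_cases hz : ⟪e₁, x⟫ = 0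
      · rw [if_pos hz]
        exact (Set.indicator_of_notMem (show x ∉ U from fun hc => hc hz)
          (1 : En n → ℝ≥0∞)).symm
      · rw [if_neg hz]
        exact (Set.indicator_of_mem (show x ∈ U from hz) (1 : En n → ℝ≥0∞)).symm
    rw [this, lintegral_indicator hUopen.measurableSet] at hpolar
    simpa using hpolar
  have hne : U.Nonempty := ⟨e₁, by
    simp only [hU, Set.mem_setOf_eq, real_inner_self_eq_norm_sq, he₁]
    norm_num⟩
  exact (hUopen.measure_pos volume hne).ne' hUvol

end CSigma


/-- Proposition 7: the affine energy equals the Dirichlet energy for radial functions: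
if `u(x) = φ(|x|)` is `C¹` with compact support, then `E_p(u) = (∫_{ℝⁿ} |∇u|^p dx)^{1/p}`. -/
theorem statement13 (n : ℕ) (hn : 2 ≤ n) (p : ℝ) (hp : 1 ≤ p) (hpn : p < n)
    (e₁ : En n) (he₁ : ‖e₁‖ = 1)
    (u : En n → ℝ) (hu : ContDiff ℝ 1 u) (hcs : HasCompactSupport u)
    (φ : ℝ → ℝ) (hrad : ∀ x : En n, u x = φ ‖x‖) :
    affineEnergyAll n p e₁ u = (∫ x, ‖fderiv ℝ u x‖ ^ p) ^ (1 / p) := by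
  have hp0 : 0 < p := lt_of_lt_of_le one_pos hp
  have hn0 : (0:ℝ) < (n:ℝ) := by exact_mod_cast Nat.lt_of_lt_of_le Nat.zero_lt_two hn
  have hω : 0 < nOmega n := nOmega_pos hn
  have hσu_eq : sphereMeasure n Set.univ = ENNReal.ofReal (nOmega n) :=
    sphereMeasure_univ_ofReal hn
  have hσ0 : sphereMeasure n Set.univ ≠ 0 := by
    rw [hσu_eq]; exact (ENNReal.ofReal_pos.mpr hω).ne'
  have hσtop : sphereMeasure n Set.univ ≠ ⊤ := measure_ne_top _ _
  set cσ : ℝ≥0∞ := ∫⁻ ξ, ENNReal.ofReal (|⟪e₁, (ξ : En n)⟫| ^ p) ∂sphereMeasure n with hcσ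
  have hcσtop : cσ ≠ ⊤ := csigma_ne_top he₁ hp0
  have hcσ0 : cσ ≠ 0 := csigma_ne_zero hn he₁ hp0
  set I : ℝ≥0∞ := ∫⁻ r : Set.Ioi (0:ℝ), ENNReal.ofReal (‖fderiv ℝ u (r.1 • e₁)‖ ^ p)
    ∂(Measure.volumeIoiPow (Module.finrank ℝ (En n) - 1)) with hI
  set D : ℝ := ∫ x, ‖fderiv ℝ u x‖ ^ p with hDdef
  set C : ℝ := ∫ x, |fderiv ℝ u x e₁| ^ p with hCdef
  have hDnn : 0 ≤ D := integral_nonneg fun x => by positivity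
  have hCnn : 0 ≤ C := integral_nonneg fun x => by positivity
  have hDf : ENNReal.ofReal D = sphereMeasure n Set.univ * I :=
    hD_fact hn hu hcs hrad he₁ hp0
  have hCf : ENNReal.ofReal C = cσ * I := hC_fact hn hu hcs hrad he₁ hp0
  have hItop : I ≠ ⊤ := by
    intro h
    rw [h, ENNReal.mul_top hσ0] at hDf
    exact ENNReal.ofReal_ne_top hDf
  have hPsi : ∀ ξ : unitSphere n, PsiAll n p u ξ = C := fun ξ =>
    radial_psi_const hu hrad he₁ p ξ
  have hαint : (∫ ξ, |⟪e₁, (ξ : En n)⟫| ^ p ∂(sphereMeasure n)) = cσ.toReal := by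
    rw [integral_eq_lintegral_of_nonneg_ae
      (Filter.Eventually.of_forall fun ξ => by positivity)
      (((continuous_const.inner continuous_subtype_val).abs.rpow_const
        fun x => Or.inr hp0.le).aestronglyMeasurable)]
  have hint : (∫⁻ ξ, ENNReal.ofReal (PsiAll n p u ξ) ^ (-((n:ℝ)/p)) ∂sphereMeasure n)
      = (ENNReal.ofReal C) ^ (-((n:ℝ)/p)) * sphereMeasure n Set.univ := by
    rw [lintegral_congr fun ξ => by rw [hPsi ξ], lintegral_const]
  rw [affineEnergyAll, hint, alphanp, hαint]
  by_cases hI0 : I = 0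
  · have hD0 : D = 0 := le_antisymm (by
      have := hDf
      rw [hI0, mul_zero, ENNReal.ofReal_eq_zero] at this
      exact this) hDnn
    have hC0 : ENNReal.ofReal C = 0 := by rw [hCf, hI0, mul_zero]
    rw [hD0, Real.zero_rpow (by positivity : (1:ℝ)/p ≠ 0)]
    rw [hC0, ENNReal.zero_rpow_of_neg (neg_lt_zero.mpr (by positivity) : -(((n:ℝ))/p) < 0)]
    rw [ENNReal.top_mul hσ0, ENNReal.top_rpow_of_neg (neg_lt_zero.mpr (by positivity) : -(1/(n:ℝ)) < 0)]
    simp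
  · have hCne0 : ENNReal.ofReal C ≠ 0 := by rw [hCf]; exact mul_ne_zero hcσ0 hI0
    have hCnetop : ENNReal.ofReal C ≠ ⊤ := ENNReal.ofReal_ne_top
    have hrpow_ne_top : (ENNReal.ofReal C) ^ (-((n:ℝ)/p)) ≠ ⊤ := by
      rw [Ne, ENNReal.rpow_eq_top_iff]
      push_neg
      exact ⟨fun h => absurd h hCne0, fun h => absurd h hCnetop⟩
    have hexp : (-(((n:ℝ))/p)) * (-(1/(n:ℝ))) = 1/p := by
      field_simp
    have h2 : ((ENNReal.ofReal C ^ (-((n:ℝ)/p)) * sphereMeasure n Set.univ) ^ (-(1/(n:ℝ))))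
        = (cσ * I) ^ ((1:ℝ)/p) * (sphereMeasure n Set.univ) ^ (-(1/(n:ℝ))) := by
      rw [ENNReal.mul_rpow_of_ne_top hrpow_ne_top hσtop, ← ENNReal.rpow_mul, hexp, hCf]
    rw [h2]
    have hst : (sphereMeasure n Set.univ).toReal = nOmega n := by
      rw [hσu_eq, ENNReal.toReal_ofReal hω.le]
    have hct : 0 < cσ.toReal := ENNReal.toReal_pos hcσ0 hcσtop
    have hit : 0 < I.toReal := ENNReal.toReal_pos hI0 hItop
    have hDval : D = (sphereMeasure n Set.univ).toReal * I.toReal := by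
      rw [← ENNReal.toReal_mul, ← hDf, ENNReal.toReal_ofReal hDnn]
    rw [ENNReal.toReal_mul, ← ENNReal.toReal_rpow, ← ENNReal.toReal_rpow,
      ENNReal.toReal_mul, hDval, hst]
    set st : ℝ := nOmega n
    set ct : ℝ := cσ.toReal
    set it : ℝ := I.toReal
    have hA : ((n:ℝ)+p)/((n:ℝ)*p) + -(1/(n:ℝ)) = 1/p := by field_simp; ring
    have hB : -(1/p) + 1/p = 0 := by ring
    calc st ^ (((n:ℝ)+p)/((n:ℝ)*p)) * ct ^ (-(1/p)) * ((ct*it) ^ ((1:ℝ)/p) * st ^ (-(1/(n:ℝ))))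
        = (st ^ (((n:ℝ)+p)/((n:ℝ)*p)) * st ^ (-(1/(n:ℝ)))) * (ct ^ (-(1/p)) * ct ^ ((1:ℝ)/p))
            * it ^ ((1:ℝ)/p) := by
          rw [Real.mul_rpow hct.le hit.le]; ring
      _ = st ^ ((1:ℝ)/p) * 1 * it ^ ((1:ℝ)/p) := by
          rw [← Real.rpow_add hω, ← Real.rpow_add hct, hA, hB, Real.rpow_zero]
      _ = (st * it) ^ ((1:ℝ)/p) := by
          rw [mul_one, ← Real.mul_rpow hω.le hit.le]
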